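/- Let μ₁, μ₂, μ₃ be real numbers with μ₁ > μ₂ + μ₃ and μ₂ > μ₃ ≥ 0, and let (t_s)_{s∈ℕ} be a sequence of reals with 0 ≤ t_s ≤ 1 for all s. Define T(μ) = ∑_{s=0}^∞ e^{−μ} (μ^s/s!) t_s (the series converges absolutely). Then t₁ ≥ (μ₁ / (μ₁(μ₂ − μ₃) − (μ₂² − μ₃²))) · ( e^{μ₂} T(μ₂) − e^{μ₃} T(μ₃) − ((μ₂² − μ₃²)/μ₁²) · ( e^{μ₁} T(μ₁) − t₀ ) ), where the denominator μ₁(μ₂ − μ₃) − (μ₂² − μ₃²) = (μ₂ − μ₃)(μ₁ − μ₂ − μ₃) is strictly positive. -/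

import Mathlib

lemma pow_sub_pow_le_aux (a b c : ℝ) (hb : 0 ≤ b) (hba : b ≤ a) (hc : a + b ≤ c) :
    ∀ n : ℕ, a ^ (n+2) - b ^ (n+2) ≤ (a^2 - b^2) * c ^ n := by
  have ha : 0 ≤ a := hb.trans hba
  have hc0 : 0 ≤ c := by linarith
  intro n
  induction n with
  | zero => simp
  | succ n ih =>
    have hbn : b ^ n ≤ c ^ n := pow_le_pow_left₀ hb (by linarith) n
    have hcn : (0:ℝ) ≤ c ^ n := pow_nonneg hc0 n
    have hbn0 : (0:ℝ) ≤ b ^ n := pow_nonneg hb n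
    have key : (a - b) * b ^ (n+2) ≤ (a^2 - b^2) * c^n * (c - a) := by
      have h1 : b ^ (n+2) = b^2 * b^n := by ring
      have h2 : (a^2-b^2) * c^n * (c-a) ≥ (a-b)*(a+b)*b^n*b := by
        have : (a+b) * c^n * (c-a) ≥ (a+b)*b^n*b := by
          nlinarith [mul_le_mul hbn (by linarith : b ≤ c - a) hb hcn]
        nlinarith [this]
      nlinarith [h2, mul_nonneg (mul_nonneg (mul_nonneg (sub_nonneg.2 hba) hbn0) hb) ha]
    have step : a * (a^(n+2) - b^(n+2)) ≤ a * ((a^2-b^2) * c^n) :=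
      mul_le_mul_of_nonneg_left ih ha
    calc a^(n+1+2) - b^(n+1+2) = a * (a^(n+2) - b^(n+2)) + (a-b) * b^(n+2) := by ring
      _ ≤ a * ((a^2-b^2) * c^n) + (a^2-b^2) * c^n * (c-a) := by linarith
      _ = (a^2-b^2) * c^(n+1) := by ring

/-- The observable quantity at laser intensity `μ`:
`T(μ) = ∑_{s=0}^∞ e^{−μ} (μ^s/s!) t_s` (Poisson average of `(t_s)`). -/
noncomputable def decoyT (μ : ℝ) (t : ℕ → ℝ) : ℝ :=
  ∑' s : ℕ, Real.exp (-μ) * μ ^ s / (Nat.factorial s : ℝ) * t s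

lemma decoy_summable (μ : ℝ) (hμ : 0 ≤ μ) (t : ℕ → ℝ) (ht0 : ∀ s, 0 ≤ t s)
    (ht1 : ∀ s, t s ≤ 1) :
    Summable (fun s : ℕ => μ ^ s / (Nat.factorial s : ℝ) * t s) := by
  refine Summable.of_nonneg_of_le (fun s => ?_) (fun s => ?_)
    (Real.summable_pow_div_factorial μ)
  · exact mul_nonneg (div_nonneg (pow_nonneg hμ s) (Nat.cast_nonneg _)) (ht0 s)
  · calc μ ^ s / (Nat.factorial s : ℝ) * t s
        ≤ μ ^ s / (Nat.factorial s : ℝ) * 1 :=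
          mul_le_mul_of_nonneg_left (ht1 s)
            (div_nonneg (pow_nonneg hμ s) (Nat.cast_nonneg _))
      _ = μ ^ s / (Nat.factorial s : ℝ) := mul_one _

lemma exp_mul_decoyT (μ : ℝ) (t : ℕ → ℝ) :
    Real.exp μ * decoyT μ t = ∑' s : ℕ, μ ^ s / (Nat.factorial s : ℝ) * t s := by
  unfold decoyT
  have h : ∀ s : ℕ, Real.exp (-μ) * μ ^ s / (Nat.factorial s : ℝ) * t s
      = Real.exp (-μ) * (μ ^ s / (Nat.factorial s : ℝ) * t s) := fun s => by ring
  simp_rw [h, tsum_mul_left, ← mul_assoc, ← Real.exp_add]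
  simp

/-- **Decoy-state lower bound on the single-photon term `t₁`.**
For intensities `μ₁ > μ₂ + μ₃` and `μ₂ > μ₃ ≥ 0`, and per-photon-number
probabilities `0 ≤ t_s ≤ 1`, the denominator
`μ₁(μ₂ − μ₃) − (μ₂² − μ₃²) = (μ₂ − μ₃)(μ₁ − μ₂ − μ₃)` is strictly positive and
`t₁ ≥ (μ₁/(μ₁(μ₂ − μ₃) − (μ₂² − μ₃²))) · (e^{μ₂}T(μ₂) − e^{μ₃}T(μ₃)
      − ((μ₂² − μ₃²)/μ₁²)·(e^{μ₁}T(μ₁) − t₀))`. -/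
theorem decoy_t1_lower_bound (μ₁ μ₂ μ₃ : ℝ) (h1 : μ₂ + μ₃ < μ₁)
    (h32 : μ₃ < μ₂) (h3 : 0 ≤ μ₃)
    (t : ℕ → ℝ) (ht0 : ∀ s, 0 ≤ t s) (ht1 : ∀ s, t s ≤ 1) :
    0 < μ₁ * (μ₂ - μ₃) - (μ₂ ^ 2 - μ₃ ^ 2) ∧
    μ₁ / (μ₁ * (μ₂ - μ₃) - (μ₂ ^ 2 - μ₃ ^ 2)) *
        (Real.exp μ₂ * decoyT μ₂ t - Real.exp μ₃ * decoyT μ₃ t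
          - (μ₂ ^ 2 - μ₃ ^ 2) / μ₁ ^ 2 * (Real.exp μ₁ * decoyT μ₁ t - t 0))
      ≤ t 1 := by
  have h2 : 0 ≤ μ₂ := h3.trans h32.le
  have hμ1 : 0 < μ₁ := lt_of_le_of_lt (by linarith) h1
  have hD : 0 < μ₁ * (μ₂ - μ₃) - (μ₂ ^ 2 - μ₃ ^ 2) := by nlinarith
  refine ⟨hD, ?_⟩
  set f₁ : ℕ → ℝ := fun s => μ₁ ^ s / (Nat.factorial s : ℝ) * t s with hf₁
  set f₂ : ℕ → ℝ := fun s => μ₂ ^ s / (Nat.factorial s : ℝ) * t s with hf₂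
  set f₃ : ℕ → ℝ := fun s => μ₃ ^ s / (Nat.factorial s : ℝ) * t s with hf₃
  have hs₁ := decoy_summable μ₁ hμ1.le t ht0 ht1
  have hs₂ := decoy_summable μ₂ h2 t ht0 ht1
  have hs₃ := decoy_summable μ₃ h3 t ht0 ht1
  rw [exp_mul_decoyT, exp_mul_decoyT, exp_mul_decoyT]
  -- split off first two terms
  have split : ∀ (f : ℕ → ℝ), Summable f → ∑' s, f s = f 0 + f 1 + ∑' s, f (s+2) := by
    intro f hf
    rw [Summable.tsum_eq_zero_add hf, Summable.tsum_eq_zero_add ((summable_nat_add_iff 1).2 hf), ← add_assoc]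
  have e₁ : ∑' s, f₁ s = t 0 + μ₁ * t 1 + ∑' s, f₁ (s+2) := by
    rw [split f₁ hs₁]; simp [hf₁]
  have e₂ : ∑' s, f₂ s = t 0 + μ₂ * t 1 + ∑' s, f₂ (s+2) := by
    rw [split f₂ hs₂]; simp [hf₂]
  have e₃ : ∑' s, f₃ s = t 0 + μ₃ * t 1 + ∑' s, f₃ (s+2) := by
    rw [split f₃ hs₃]; simp [hf₃]
  -- summability of shifted tails
  have hs₁' : Summable (fun s => f₁ (s+2)) := (summable_nat_add_iff 2).2 hs₁
  have hs₂' : Summable (fun s => f₂ (s+2)) := (summable_nat_add_iff 2).2 hs₂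
  have hs₃' : Summable (fun s => f₃ (s+2)) := (summable_nat_add_iff 2).2 hs₃
  -- key tail bound
  have tail : ∑' s, f₂ (s+2) - ∑' s, f₃ (s+2)
      ≤ (μ₂^2 - μ₃^2) / μ₁^2 * ∑' s, f₁ (s+2) := by
    rw [← Summable.tsum_sub hs₂' hs₃', ← tsum_mul_left]
    refine Summable.tsum_le_tsum (fun s => ?_) (hs₂'.sub hs₃') (hs₁'.mul_left _)
    simp only [hf₁, hf₂, hf₃]
    have hfac : (0:ℝ) < (Nat.factorial (s+2) : ℝ) := by positivity
    have hkey := pow_sub_pow_le_aux μ₂ μ₃ μ₁ h3 h32.le h1.le s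
    have ht := ht0 (s+2)
    have hμ1' : μ₁ ≠ 0 := ne_of_gt hμ1
    have h6 : (μ₂^2 - μ₃^2) / μ₁^2 * (μ₁^(s+2) / (Nat.factorial (s+2):ℝ) * t (s+2))
        = ((μ₂^2 - μ₃^2) * μ₁^s * t (s+2)) / (Nat.factorial (s+2):ℝ) := by
      field_simp
      ring
    have h7 : μ₂ ^ (s+2) / (Nat.factorial (s+2):ℝ) * t (s+2)
        - μ₃ ^ (s+2) / (Nat.factorial (s+2):ℝ) * t (s+2)
        = ((μ₂ ^ (s+2) - μ₃ ^ (s+2)) * t (s+2)) / (Nat.factorial (s+2):ℝ) := by ring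
    rw [h6, h7]
    exact (div_le_div_iff_of_pos_right hfac).2 (mul_le_mul_of_nonneg_right hkey ht)
  -- tail of f₁ in terms of observable
  have t1nn := ht0 1
  set K : ℝ := (μ₂^2 - μ₃^2) / μ₁^2 with hK
  have hT1 : ∑' s, f₁ (s+2) = ∑' s, f₁ s - t 0 - μ₁ * t 1 := by rw [e₁]; ring
  have main : ∑' s, f₂ s - ∑' s, f₃ s - K * (∑' s, f₁ s - t 0)
      ≤ t 1 * ((μ₁ * (μ₂ - μ₃) - (μ₂ ^ 2 - μ₃ ^ 2)) / μ₁) := by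
    have hKμ : K * μ₁ = (μ₂^2 - μ₃^2) / μ₁ := by rw [hK]; field_simp
    have : ∑' s, f₂ s - ∑' s, f₃ s - K * (∑' s, f₁ s - t 0)
        = (μ₂ - μ₃) * t 1 + (∑' s, f₂ (s+2) - ∑' s, f₃ (s+2))
          - K * (μ₁ * t 1 + ∑' s, f₁ (s+2)) := by rw [e₁, e₂, e₃]; ring
    rw [this]
    have hKtail : K * ∑' s, f₁ (s+2) ≥ ∑' s, f₂ (s+2) - ∑' s, f₃ (s+2) := tail
    have goal_eq : t 1 * ((μ₁ * (μ₂ - μ₃) - (μ₂ ^ 2 - μ₃ ^ 2)) / μ₁)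
        = (μ₂ - μ₃) * t 1 - K * μ₁ * t 1 := by
      rw [hKμ]; field_simp
    rw [goal_eq]; linarith
  -- final arithmetic
  have hDμ : 0 < (μ₁ * (μ₂ - μ₃) - (μ₂ ^ 2 - μ₃ ^ 2)) / μ₁ := div_pos hD hμ1
  have := mul_le_mul_of_nonneg_left main
    (le_of_lt (div_pos hμ1 hD) : 0 ≤ μ₁ / (μ₁ * (μ₂ - μ₃) - (μ₂ ^ 2 - μ₃ ^ 2)))
  calc μ₁ / (μ₁ * (μ₂ - μ₃) - (μ₂ ^ 2 - μ₃ ^ 2)) *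
        (∑' s, f₂ s - ∑' s, f₃ s - K * (∑' s, f₁ s - t 0))
      ≤ μ₁ / (μ₁ * (μ₂ - μ₃) - (μ₂ ^ 2 - μ₃ ^ 2)) *
        (t 1 * ((μ₁ * (μ₂ - μ₃) - (μ₂ ^ 2 - μ₃ ^ 2)) / μ₁)) := this
    _ = t 1 := by field_simp
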